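/- Let D₀ ⊆ ℂ be a nonempty bounded convex open set, let ζ₀ ∈ D₀ satisfy dist(ζ₀, ∂D₀) = sup_{ζ ∈ D₀} dist(ζ, ∂D₀), and write R = dist(ζ₀, ∂D₀). Then for every r with 0 < r < (√3/(5+√3))·R there exist points p̃, q̃ ∈ D₀ and p̂, q̂ ∈ ∂D₀ such that the open discs of radius r centered at p̃ and at q̃ are contained in D₀, |p̂ − p̃| = r, |q̂ − q̃| = r, and |p̂ − q̂| > 5r. -/

import Mathlib

open Metric Set RealInnerProductSpace

set_option maxHeartbeats 1000000 in
/-- **Lemma 1 (inner discs).** Let `D₀ ⊆ ℂ` be a nonempty bounded convex open set,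
`ζ₀ ∈ D₀` a point at maximal distance `R` to the boundary. For every
`0 < r < (√3/(5+√3))·R` there are points `p̃, q̃ ∈ D₀` and `p̂, q̂ ∈ ∂D₀` such that the
open discs of radius `r` centered at `p̃, q̃` lie in `D₀`, `|p̂ − p̃| = |q̂ − q̃| = r`,
and `|p̂ − q̂| > 5r`. -/
theorem exists_two_tangent_discs
    (D₀ : Set ℂ) (hne : D₀.Nonempty) (hconv : Convex ℝ D₀) (hopen : IsOpen D₀)
    (hbdd : Bornology.IsBounded D₀) (ζ₀ : ℂ) (hζ₀ : ζ₀ ∈ D₀)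
    (hmax : ∀ ζ ∈ D₀, infDist ζ (frontier D₀) ≤ infDist ζ₀ (frontier D₀))
    (r : ℝ) (hr : 0 < r)
    (hrR : r < Real.sqrt 3 / (5 + Real.sqrt 3) * infDist ζ₀ (frontier D₀)) :
    ∃ ptilde qtilde phat qhat : ℂ,
      ptilde ∈ D₀ ∧ qtilde ∈ D₀ ∧ phat ∈ frontier D₀ ∧ qhat ∈ frontier D₀ ∧
      ball ptilde r ⊆ D₀ ∧ ball qtilde r ⊆ D₀ ∧
      dist phat ptilde = r ∧ dist qhat qtilde = r ∧ 5 * r < dist phat qhat := by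
  have hDne : D₀ ≠ univ := by
    intro h
    rw [h, frontier_univ, infDist_empty, mul_zero] at hrR
    linarith
  set R := infDist ζ₀ (frontier D₀) with hRdef
  have hfr_disj : ∀ x ∈ frontier D₀, x ∉ D₀ := by
    intro x hx hxD
    rw [hopen.frontier_eq] at hx
    exact hx.2 hxD
  have hfr_sub : frontier D₀ ⊆ D₀ᶜ := fun x hx => hfr_disj x hx
  have key : ∀ x ∈ D₀, infDist x (frontier D₀) = infDist x D₀ᶜ ∧
      ∃ y ∈ frontier D₀, dist x y = infDist x (frontier D₀) := by
    intro x hx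
    obtain ⟨y, hy, hyd⟩ := exists_mem_frontier_infDist_compl_eq_dist hx hDne
    have hfr_ne : (frontier D₀).Nonempty := ⟨y, hy⟩
    have h1 : infDist x D₀ᶜ ≤ infDist x (frontier D₀) :=
      infDist_le_infDist_of_subset hfr_sub hfr_ne
    have h2 : infDist x (frontier D₀) ≤ infDist x D₀ᶜ := by
      rw [hyd]; exact infDist_le_dist_of_mem hy
    exact ⟨le_antisymm h2 h1, y, hy, by rw [← hyd, le_antisymm h2 h1]⟩
  obtain ⟨hζeq, s, hs_fr, hs_dist⟩ := key ζ₀ hζ₀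
  rw [← hRdef] at hs_dist
  have hball : ∀ x ∈ D₀, ball x (infDist x (frontier D₀)) ⊆ D₀ := by
    intro x hx
    rw [(key x hx).1]
    exact ball_infDist_compl_subset
  have hballζ : ball ζ₀ R ⊆ D₀ := by rw [hRdef]; exact hball ζ₀ hζ₀
  have hRpos : 0 < R := by
    have hcne : (D₀ᶜ : Set ℂ).Nonempty := nonempty_compl.2 hDne
    have h1 : ζ₀ ∉ closure (D₀ᶜ) := by
      rw [(isClosed_compl_iff.mpr hopen).closure_eq]
      exact fun h => h hζ₀
    have h2 : ζ₀ ∉ D₀ᶜ := fun h => h hζ₀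
    have h3 := ((isClosed_compl_iff.mpr hopen).notMem_iff_infDist_pos hcne).mp h2
    rw [hRdef, hζeq]; exact h3
  have hs3 : Real.sqrt 3 > 0 := Real.sqrt_pos.mpr (by norm_num)
  have hrR' : r < R := by
    have h1 : Real.sqrt 3 / (5 + Real.sqrt 3) < 1 := by
      rw [div_lt_one (by linarith)]; linarith
    calc r < Real.sqrt 3 / (5 + Real.sqrt 3) * R := hrR
    _ < 1 * R := mul_lt_mul_of_pos_right h1 hRpos
    _ = R := one_mul R
  -- unit direction toward the nearest boundary point
  set u : ℂ := R⁻¹ • (s - ζ₀) with hu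
  have hsnorm : ‖s - ζ₀‖ = R := by rw [← hs_dist, dist_eq_norm, norm_sub_rev]
  have hunorm : ‖u‖ = 1 := by
    rw [hu, norm_smul, norm_inv, Real.norm_eq_abs, abs_of_pos hRpos, hsnorm]
    field_simp
  have hRu : R • u = s - ζ₀ := by
    rw [hu, smul_smul, mul_inv_cancel₀ hRpos.ne', one_smul]
  have hs_eq : s = ζ₀ + R • u := by rw [hRu]; ring
  -- p̃
  set pt : ℂ := ζ₀ + (R - r) • u with hpt
  have hRr_nonneg : (0:ℝ) ≤ R - r := by linarith
  have hpt_dist : dist pt ζ₀ = R - r := by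
    rw [dist_eq_norm, hpt, add_sub_cancel_left, norm_smul, hunorm, mul_one,
      Real.norm_eq_abs, abs_of_nonneg hRr_nonneg]
  have hpt_ball_sub : ball pt r ⊆ D₀ := by
    refine subset_trans (ball_subset_ball' ?_) hballζ
    rw [hpt_dist]; linarith
  have hpt_mem : pt ∈ D₀ := hballζ (by rw [mem_ball, hpt_dist]; linarith)
  have hp_dist : dist s pt = r := by
    have h1 : s - pt = r • u := by rw [hpt, hs_eq]; module
    rw [dist_eq_norm, h1, norm_smul, hunorm, Real.norm_eq_abs, abs_of_pos hr, mul_one]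
  -- q̃₀ : the antipodal inner point
  set qt0 : ℂ := ζ₀ - (R - r) • u with hqt0
  have hqt0_dist : dist qt0 ζ₀ = R - r := by
    have h1 : qt0 - ζ₀ = -((R - r) • u) := by rw [hqt0]; module
    rw [dist_eq_norm, h1, norm_neg, norm_smul, hunorm, mul_one,
      Real.norm_eq_abs, abs_of_nonneg hRr_nonneg]
  have hqt0_mem : qt0 ∈ D₀ := hballζ (by rw [mem_ball, hqt0_dist]; linarith)
  obtain ⟨hq0eq, q, hq_fr, hq_dist⟩ := key qt0 hqt0_mem
  set d := infDist qt0 (frontier D₀) with hd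
  have hd_le : d ≤ R := by rw [hd]; exact hmax qt0 hqt0_mem
  have hd_ge : r ≤ d := by
    have h1 := infDist_le_infDist_add_dist (x := ζ₀) (y := qt0) (s := frontier D₀)
    rw [← hRdef, ← hd, dist_comm, hqt0_dist] at h1
    linarith
  have hdpos : 0 < d := lt_of_lt_of_le hr hd_ge
  -- q̃
  set qt : ℂ := q + (r / d) • (qt0 - q) with hqt
  have hq_dist' : ‖qt0 - q‖ = d := by rw [← hq_dist, dist_eq_norm]
  have hq_tangent : dist q qt = r := by
    have h1 : q - qt = (-(r / d)) • (qt0 - q) := by rw [hqt]; module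
    rw [dist_eq_norm, h1, norm_smul, hq_dist', Real.norm_eq_abs, abs_neg,
      abs_of_pos (div_pos hr hdpos), div_mul_cancel₀ _ hdpos.ne']
  have hqt_dist : dist qt qt0 = d - r := by
    have h1 : qt - qt0 = (r / d - 1) • (qt0 - q) := by rw [hqt]; module
    have h2 : r / d - 1 ≤ 0 := by
      rw [sub_nonpos, div_le_one hdpos]; exact hd_ge
    rw [dist_eq_norm, h1, norm_smul, hq_dist', Real.norm_eq_abs, abs_of_nonpos h2]
    field_simp
    ring
  have hqt_ball_sub : ball qt r ⊆ D₀ := by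
    refine subset_trans (ball_subset_ball' ?_) (hball qt0 hqt0_mem)
    rw [hqt_dist, ← hd]; linarith
  have hqt_mem : qt ∈ D₀ :=
    hball qt0 hqt0_mem (by rw [mem_ball, hqt_dist, ← hd]; linarith)
  -- main distance estimate
  set v : ℂ := q - ζ₀ with hv
  have hv_lb : R ≤ ‖v‖ := by
    by_contra h
    push_neg at h
    have h1 : q ∈ ball ζ₀ R := by rwa [mem_ball, dist_eq_norm]
    exact hfr_disj q hq_fr (hballζ h1)
  have htpos : (0:ℝ) < R - r := by linarith
  have hv_ub : ‖v + (R - r) • u‖ ≤ R := by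
    have h1 : v + (R - r) • u = q - qt0 := by rw [hv, hqt0]; module
    rw [h1, ← norm_sub_rev, hq_dist']
    exact hd_le
  have hinner : ⟪v, u⟫ ≤ -(R - r)/2 := by
    have hexp : ‖v + (R - r) • u‖^2 = ‖v‖^2 + 2*((R - r)*⟪v,u⟫) + ‖(R - r) • u‖^2 := by
      rw [@norm_add_sq_real, real_inner_smul_right]
    have h2 : ‖(R - r) • u‖^2 = (R - r)^2 := by
      rw [norm_smul, hunorm, Real.norm_eq_abs, abs_of_pos htpos, mul_one]
    have h3 : ‖v + (R - r) • u‖^2 ≤ R^2 := pow_le_pow_left₀ (norm_nonneg _) hv_ub 2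
    have h4 : R^2 ≤ ‖v‖^2 := pow_le_pow_left₀ hRpos.le hv_lb 2
    nlinarith
  have hfinal_sq : 2*R^2 + R*(R - r) ≤ ‖R • u - v‖^2 := by
    have hexp : ‖R • u - v‖^2 = ‖R • u‖^2 - 2*(R*⟪v,u⟫) + ‖v‖^2 := by
      rw [@norm_sub_sq_real, real_inner_smul_left, real_inner_comm]
    have h2 : ‖R • u‖^2 = R^2 := by
      rw [norm_smul, hunorm, Real.norm_eq_abs, abs_of_pos hRpos, mul_one]
    have h4 : R^2 ≤ ‖v‖^2 := pow_le_pow_left₀ hRpos.le hv_lb 2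
    nlinarith
  have hsq : (5*r)^2 < ‖R • u - v‖^2 := by
    have h3 : Real.sqrt 3 ^ 2 = 3 := Real.sq_sqrt (by norm_num)
    have h5 : r * (5 + Real.sqrt 3) < Real.sqrt 3 * R := by
      rw [div_mul_eq_mul_div, lt_div_iff₀ (by linarith)] at hrR
      linarith
    have h6 : 5*r < Real.sqrt 3 * (R - r) := by
      have : Real.sqrt 3 * (R - r) = Real.sqrt 3 * R - r * Real.sqrt 3 := by ring
      rw [this]; linarith
    have h7 : (5*r)^2 < (Real.sqrt 3 * (R - r))^2 :=
      pow_lt_pow_left₀ h6 (by linarith) (by norm_num)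
    have h7' : (Real.sqrt 3 * (R - r))^2 = 3*(R - r)^2 := by rw [mul_pow, h3]
    have haux : (0:ℝ) ≤ r * (5*R - 3*r) := mul_nonneg hr.le (by linarith)
    have h8 : 3*(R - r)^2 ≤ 2*R^2 + R*(R - r) := by nlinarith [haux]
    calc (5*r)^2 < 3*(R - r)^2 := by rw [← h7']; exact h7
    _ ≤ 2*R^2 + R*(R - r) := h8
    _ ≤ ‖R • u - v‖^2 := hfinal_sq
  have hfinal : 5 * r < dist s q := by
    have h1 : s - q = R • u - v := by rw [hv, hs_eq]; module
    rw [dist_eq_norm, h1]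
    have h2 := lt_of_pow_lt_pow_left₀ 2 (norm_nonneg (R • u - v)) hsq
    linarith
  exact ⟨pt, qt, s, q, hpt_mem, hqt_mem, hs_fr, hq_fr, hpt_ball_sub, hqt_ball_sub,
    hp_dist, hq_tangent, hfinal⟩
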